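/- Let q = p^r, G = (ℤ_p)^r acting diagonally on edges of K_{q,q} (shores indexed by G). Suppose H is a G-invariant subgraph that is a union of k edge orbits (1 ≤ k ≤ r) such that every connected component of H has exactly p^{k-1} vertices in each shore and there are exactly p^{r-k+1} components. If a new edge e connects the component of the vertex (O, shore 1) to a different component of H (where O is the identity of G), then the union of H with the G-orbit of e has exactly p^{r-k} connected components, each with exactly p^k vertices in each shore. -/

import Mathlib

/-- The bipartite graph on `G ⊕ G` whose edges are the elements of an
edge set `E ⊆ G × G` (an edge `(a,b)` joins vertex `a` of the first shore to vertex
`b` of the second shore). -/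
def bipGraph {G : Type*} (E : Set (G × G)) : SimpleGraph (G ⊕ G) where
  Adj v w := (∃ a b, (a, b) ∈ E ∧ v = Sum.inl a ∧ w = Sum.inr b) ∨
             (∃ a b, (a, b) ∈ E ∧ w = Sum.inl a ∧ v = Sum.inr b)
  symm := ⟨fun v w h => h.elim (fun h => Or.inr h) (fun h => Or.inl h)⟩
  loopless := ⟨by rintro v (⟨a, b, _, rfl, h⟩ | ⟨a, b, _, rfl, h⟩) <;> simp at h⟩

/-- The `G`-orbit of the edge `e` under the diagonal translation action
`g • (a, b) = (g + a, g + b)`. -/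
def edgeOrbit {G : Type*} [Add G] (e : G × G) : Set (G × G) :=
  Set.range fun g : G => (g + e.1, g + e.2)

section Aux

open SimpleGraph

variable {G : Type*} [AddCommGroup G]

lemma bip_adj {E : Set (G × G)} {x y : G} :
    (bipGraph E).Adj (Sum.inl x) (Sum.inr y) ↔ (x, y) ∈ E := by
  constructor
  · rintro (⟨a, c, h, h1, h2⟩ | ⟨a, c, h, h1, h2⟩)
    · obtain rfl : x = a := Sum.inl_injective h1
      obtain rfl : y = c := Sum.inr_injective h2
      exact h
    · simp at h1
  · intro h
    exact Or.inl ⟨x, y, h, rfl, rfl⟩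

variable {E : Set (G × G)}

lemma mem_iff_diff (hinv : ∀ e ∈ E, ∀ g : G, (g + e.1, g + e.2) ∈ E) {x y : G} :
    (x, y) ∈ E ↔ (0, y - x) ∈ E := by
  constructor
  · intro h
    have h2 := hinv (x, y) h (-x)
    have e1 : -x + x = 0 := by abel
    have e2 : -x + y = y - x := by abel
    rwa [e1, e2] at h2
  · intro h
    have h2 := hinv (0, y - x) h x
    have e1 : x + (0 : G) = x := by abel
    have e2 : x + (y - x) = y := by abel
    rwa [e1, e2] at h2

/-- The subgroup generated by the differences of the edge-orbit difference set
relative to a base difference `d0`. -/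
def Wgp (E : Set (G × G)) (d0 : G) : AddSubgroup G :=
  AddSubgroup.closure ((fun d => d - d0) '' {d : G | (0, d) ∈ E})

lemma reach_add (hinv : ∀ e ∈ E, ∀ g : G, (g + e.1, g + e.2) ∈ E) {d0 : G}
    (hd0 : ((0 : G), d0) ∈ E) {w : G} (hw : w ∈ Wgp E d0) :
    ∀ x : G, (bipGraph E).Reachable (Sum.inl x) (Sum.inl (x + w)) := by
  induction hw using AddSubgroup.closure_induction with
  | mem d hd =>
    obtain ⟨d', hd', rfl⟩ := hd
    intro x
    have h1 : (bipGraph E).Adj (Sum.inl x) (Sum.inr (x + d')) := by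
      rw [bip_adj, mem_iff_diff hinv]
      have e : x + d' - x = d' := by abel
      rwa [e]
    have h2 : (bipGraph E).Adj (Sum.inl (x + (d' - d0))) (Sum.inr (x + d')) := by
      rw [bip_adj, mem_iff_diff hinv]
      have e : x + d' - (x + (d' - d0)) = d0 := by abel
      rwa [e]
    exact h1.reachable.trans h2.reachable.symm
  | zero =>
    intro x
    rw [add_zero]
  | add w1 w2 _ _ ih1 ih2 =>
    intro x
    have h2 := ih2 (x + w1)
    rw [add_assoc] at h2
    exact (ih1 x).trans h2
  | neg w _ ih =>
    intro x
    have h := ih (x + -w)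
    have e : x + -w + w = x := by abel
    rw [e] at h
    exact h.symm

lemma reach_inr (hinv : ∀ e ∈ E, ∀ g : G, (g + e.1, g + e.2) ∈ E) {d0 : G}
    (hd0 : ((0 : G), d0) ∈ E) (y : G) :
    (bipGraph E).Reachable (Sum.inr y) (Sum.inl (y - d0)) := by
  have h : (bipGraph E).Adj (Sum.inl (y - d0)) (Sum.inr y) := by
    rw [bip_adj, mem_iff_diff hinv]
    have e : y - (y - d0) = d0 := by abel
    rwa [e]
  exact h.reachable.symm

/-- The quotient map used as a component invariant. -/
def qmap (E : Set (G × G)) (d0 : G) : G ⊕ G → G ⧸ Wgp E d0 := fun v =>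
  match v with
  | Sum.inl x => QuotientAddGroup.mk x
  | Sum.inr y => QuotientAddGroup.mk (y - d0)

lemma qmap_adj (hinv : ∀ e ∈ E, ∀ g : G, (g + e.1, g + e.2) ∈ E) (d0 : G)
    {v w : G ⊕ G} (h : (bipGraph E).Adj v w) : qmap E d0 v = qmap E d0 w := by
  have key : ∀ x y : G, (x, y) ∈ E →
      (QuotientAddGroup.mk x : G ⧸ Wgp E d0) = QuotientAddGroup.mk (y - d0) := by
    intro x y hxy
    rw [QuotientAddGroup.eq]
    have hd : ((0 : G), y - x) ∈ E := (mem_iff_diff hinv).mp hxy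
    have e : -x + (y - d0) = (y - x) - d0 := by abel
    rw [e]
    exact AddSubgroup.subset_closure ⟨y - x, hd, rfl⟩
  rcases h with ⟨x, y, hxy, rfl, rfl⟩ | ⟨x, y, hxy, rfl, rfl⟩
  · exact key x y hxy
  · exact (key x y hxy).symm

lemma qmap_reach (hinv : ∀ e ∈ E, ∀ g : G, (g + e.1, g + e.2) ∈ E) (d0 : G)
    {v w : G ⊕ G} (h : (bipGraph E).Reachable v w) : qmap E d0 v = qmap E d0 w := by
  obtain ⟨p⟩ := h
  induction p with
  | nil => rfl
  | cons hadj _ ih => exact (qmap_adj hinv d0 hadj).trans ih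

lemma mk_inl_eq_iff (hinv : ∀ e ∈ E, ∀ g : G, (g + e.1, g + e.2) ∈ E) {d0 : G}
    (hd0 : ((0 : G), d0) ∈ E) (x x' : G) :
    (bipGraph E).connectedComponentMk (Sum.inl x)
      = (bipGraph E).connectedComponentMk (Sum.inl x') ↔ x' - x ∈ Wgp E d0 := by
  constructor
  · intro h
    have hr : (bipGraph E).Reachable (Sum.inl x) (Sum.inl x') :=
      (SimpleGraph.ConnectedComponent.eq).mp h
    have := qmap_reach hinv d0 hr
    simp only [qmap] at this
    rw [QuotientAddGroup.eq] at this
    have e : -x + x' = x' - x := by abel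
    rwa [e] at this
  · intro h
    have hr := reach_add hinv hd0 h x
    have e : x + (x' - x) = x' := by abel
    rw [e] at hr
    exact (SimpleGraph.ConnectedComponent.eq).mpr hr

lemma mk_inr_eq (hinv : ∀ e ∈ E, ∀ g : G, (g + e.1, g + e.2) ∈ E) {d0 : G}
    (hd0 : ((0 : G), d0) ∈ E) (y : G) :
    (bipGraph E).connectedComponentMk (Sum.inr y)
      = (bipGraph E).connectedComponentMk (Sum.inl (y - d0)) :=
  (SimpleGraph.ConnectedComponent.eq).mpr (reach_inr hinv hd0 y)

lemma exists_rep_inl (hinv : ∀ e ∈ E, ∀ g : G, (g + e.1, g + e.2) ∈ E) {d0 : G}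
    (hd0 : ((0 : G), d0) ∈ E) (c : (bipGraph E).ConnectedComponent) :
    ∃ x : G, c = (bipGraph E).connectedComponentMk (Sum.inl x) := by
  induction c using SimpleGraph.ConnectedComponent.ind with
  | _ v =>
    rcases v with x | y
    · exact ⟨x, rfl⟩
    · exact ⟨y - d0, mk_inr_eq hinv hd0 y⟩

lemma card_components (hinv : ∀ e ∈ E, ∀ g : G, (g + e.1, g + e.2) ∈ E) {d0 : G}
    (hd0 : ((0 : G), d0) ∈ E) :
    Nat.card (bipGraph E).ConnectedComponent = Nat.card (G ⧸ Wgp E d0) := by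
  apply Nat.card_congr
  refine Equiv.ofBijective
    (SimpleGraph.ConnectedComponent.lift (qmap E d0)
      (fun v w p _ => qmap_reach hinv d0 ⟨p⟩)) ⟨?_, ?_⟩
  · intro c1 c2 h
    obtain ⟨x1, rfl⟩ := exists_rep_inl hinv hd0 c1
    obtain ⟨x2, rfl⟩ := exists_rep_inl hinv hd0 c2
    simp only [SimpleGraph.ConnectedComponent.lift_mk, qmap] at h
    rw [QuotientAddGroup.eq] at h
    have e : -x1 + x2 = x2 - x1 := by abel
    rw [e] at h
    exact (mk_inl_eq_iff hinv hd0 x1 x2).mpr h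
  · intro q
    induction q using QuotientAddGroup.induction_on with
    | _ x => exact ⟨(bipGraph E).connectedComponentMk (Sum.inl x), rfl⟩

lemma shore_inl (hinv : ∀ e ∈ E, ∀ g : G, (g + e.1, g + e.2) ∈ E) {d0 : G}
    (hd0 : ((0 : G), d0) ∈ E) (c : (bipGraph E).ConnectedComponent) :
    {x : G | (bipGraph E).connectedComponentMk (Sum.inl x) = c}.ncard
      = Nat.card (Wgp E d0) := by
  obtain ⟨x0, rfl⟩ := exists_rep_inl hinv hd0 c
  have hset : {x : G | (bipGraph E).connectedComponentMk (Sum.inl x)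
      = (bipGraph E).connectedComponentMk (Sum.inl x0)}
      = (fun w => x0 + w) '' (Wgp E d0 : Set G) := by
    ext x
    simp only [Set.mem_setOf_eq, Set.mem_image, SetLike.mem_coe]
    rw [mk_inl_eq_iff hinv hd0]
    constructor
    · intro h
      refine ⟨x - x0, ?_, by abel⟩
      have := neg_mem h
      have e : -(x0 - x) = x - x0 := by abel
      rwa [e] at this
    · rintro ⟨w, hw, rfl⟩
      have e : x0 - (x0 + w) = -w := by abel
      rw [e]
      exact neg_mem hw
  rw [hset, Set.ncard_image_of_injective _ (add_right_injective x0),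
    ← Nat.card_coe_set_eq]
  exact Nat.card_congr (Equiv.setCongr rfl)

lemma shore_inr (hinv : ∀ e ∈ E, ∀ g : G, (g + e.1, g + e.2) ∈ E) {d0 : G}
    (hd0 : ((0 : G), d0) ∈ E) (c : (bipGraph E).ConnectedComponent) :
    {y : G | (bipGraph E).connectedComponentMk (Sum.inr y) = c}.ncard
      = Nat.card (Wgp E d0) := by
  obtain ⟨x0, rfl⟩ := exists_rep_inl hinv hd0 c
  have hset : {y : G | (bipGraph E).connectedComponentMk (Sum.inr y)
      = (bipGraph E).connectedComponentMk (Sum.inl x0)}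
      = (fun w => x0 + d0 + w) '' (Wgp E d0 : Set G) := by
    ext y
    simp only [Set.mem_setOf_eq, Set.mem_image, SetLike.mem_coe]
    rw [mk_inr_eq hinv hd0, mk_inl_eq_iff hinv hd0]
    constructor
    · intro h
      refine ⟨y - d0 - x0, ?_, by abel⟩
      have := neg_mem h
      have e : -(x0 - (y - d0)) = y - d0 - x0 := by abel
      rwa [e] at this
    · rintro ⟨w, hw, rfl⟩
      have e : x0 - (x0 + d0 + w - d0) = -w := by abel
      rw [e]
      exact neg_mem hw
  rw [hset, Set.ncard_image_of_injective _ (add_right_injective (x0 + d0)),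
    ← Nat.card_coe_set_eq]
  exact Nat.card_congr (Equiv.setCongr rfl)

end Aux

lemma toZMod_closure (n : ℕ) {M : Type*} [AddCommGroup M] [Module (ZMod n) M]
    (S : Set M) :
    AddSubgroup.toZModSubmodule n (AddSubgroup.closure S) = Submodule.span (ZMod n) S := by
  apply le_antisymm
  · intro x hx
    rw [AddSubgroup.mem_toZModSubmodule] at hx
    exact (AddSubgroup.closure_le ((Submodule.span (ZMod n) S).toAddSubgroup)).mpr
      Submodule.subset_span hx
  · exact Submodule.span_le.mpr fun x hx => AddSubgroup.subset_closure hx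

theorem stmt8 (p r k : ℕ) [Fact p.Prime] (hk1 : 1 ≤ k) (hkr : k ≤ r)
    (E : Set ((Fin r → ZMod p) × (Fin r → ZMod p)))
    (horb : ∃ s : Finset ((Fin r → ZMod p) × (Fin r → ZMod p)),
      s.card = k ∧ E = ⋃ e ∈ s, edgeOrbit e)
    (hinv : ∀ e ∈ E, ∀ g : Fin r → ZMod p, (g + e.1, g + e.2) ∈ E)
    (hshore : ∀ c : (bipGraph E).ConnectedComponent,
      {x : Fin r → ZMod p | (bipGraph E).connectedComponentMk (Sum.inl x) = c}.ncard
        = p ^ (k - 1) ∧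
      {y : Fin r → ZMod p | (bipGraph E).connectedComponentMk (Sum.inr y) = c}.ncard
        = p ^ (k - 1))
    (hcomp : Nat.card (bipGraph E).ConnectedComponent = p ^ (r - k + 1))
    (a b : Fin r → ZMod p)
    (ha : (bipGraph E).connectedComponentMk (Sum.inl a)
        = (bipGraph E).connectedComponentMk (Sum.inl (0 : Fin r → ZMod p)))
    (hb : (bipGraph E).connectedComponentMk (Sum.inr b)
        ≠ (bipGraph E).connectedComponentMk (Sum.inl (0 : Fin r → ZMod p))) :
    Nat.card (bipGraph (E ∪ edgeOrbit (a, b))).ConnectedComponent = p ^ (r - k) ∧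
    ∀ c : (bipGraph (E ∪ edgeOrbit (a, b))).ConnectedComponent,
      {x : Fin r → ZMod p |
        (bipGraph (E ∪ edgeOrbit (a, b))).connectedComponentMk (Sum.inl x) = c}.ncard
        = p ^ k ∧
      {y : Fin r → ZMod p |
        (bipGraph (E ∪ edgeOrbit (a, b))).connectedComponentMk (Sum.inr y) = c}.ncard
        = p ^ k := by
  classical
  have hp : p.Prime := Fact.out
  haveI : NeZero p := ⟨hp.ne_zero⟩
  -- obtain a base difference d0
  obtain ⟨s, hcard, hE⟩ := horb
  obtain ⟨e0, he0s⟩ : s.Nonempty := Finset.card_pos.mp (by omega)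
  have he0 : e0 ∈ E := by
    rw [hE]
    refine Set.mem_biUnion he0s ⟨0, ?_⟩
    simp [Prod.ext_iff]
  set d0 : Fin r → ZMod p := e0.2 - e0.1 with hd0def
  have hd0 : ((0 : Fin r → ZMod p), d0) ∈ E := by
    have : (e0.1, e0.2) ∈ E := by rwa [Prod.mk.eta]
    exact (mem_iff_diff hinv).mp this
  set E' := E ∪ edgeOrbit (a, b) with hE'def
  have hinv' : ∀ e ∈ E', ∀ g : Fin r → ZMod p, (g + e.1, g + e.2) ∈ E' := by
    rintro ⟨u, v⟩ (h | h) g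
    · exact Or.inl (hinv _ h g)
    · obtain ⟨g0, hg0⟩ := h
      refine Or.inr ⟨g + g0, ?_⟩
      simp only [Prod.ext_iff] at hg0 ⊢
      constructor
      · rw [add_assoc]; exact congrArg (g + ·) hg0.1
      · rw [add_assoc]; exact congrArg (g + ·) hg0.2
  have hd0' : ((0 : Fin r → ZMod p), d0) ∈ E' := Or.inl hd0
  set W : AddSubgroup (Fin r → ZMod p) := Wgp E d0 with hWdef
  set W' : AddSubgroup (Fin r → ZMod p) := Wgp E' d0 with hW'def
  set v : Fin r → ZMod p := b - a - d0 with hvdef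
  -- diffs of E'
  have hdiffs : {d : Fin r → ZMod p | (0, d) ∈ E'} = {d : Fin r → ZMod p | (0, d) ∈ E} ∪ {b - a} := by
    ext d
    simp only [hE'def, Set.mem_union, Set.mem_setOf_eq, Set.mem_singleton_iff]
    constructor
    · rintro (h | h)
      · exact Or.inl h
      · obtain ⟨g0, hg0⟩ := h
        simp only [Prod.ext_iff] at hg0
        right
        have hg : g0 = -a := by
          have := hg0.1
          calc g0 = g0 + a + -a := by abel
          _ = 0 + -a := by rw [this]
          _ = -a := by abel
        rw [← hg0.2, hg]
        abel
    · rintro (h | rfl)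
      · exact Or.inl h
      · refine Or.inr ⟨-a, ?_⟩
        simp only [Prod.ext_iff]
        constructor
        · abel
        · abel
  have hW' : W' = W ⊔ AddSubgroup.closure {v} := by
    rw [hW'def, hWdef, Wgp, Wgp, hdiffs, Set.image_union, AddSubgroup.closure_union,
      Set.image_singleton]
  -- v ∉ W
  have haW : a ∈ W := by
    have h := (mk_inl_eq_iff hinv hd0 a 0).mp ha
    have e : (0 : Fin r → ZMod p) - a = -a := by abel
    rw [e] at h
    exact (neg_mem_iff).mp h
  have hbW : b - d0 ∉ W := by
    intro hmem
    apply hb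
    rw [mk_inr_eq hinv hd0]
    apply (mk_inl_eq_iff hinv hd0 (b - d0) 0).mpr
    have e : (0 : Fin r → ZMod p) - (b - d0) = -(b - d0) := by abel
    rw [e]
    exact neg_mem hmem
  have hvW : v ∉ W := by
    intro hmem
    apply hbW
    have : b - d0 = v + a := by rw [hvdef]; abel
    rw [this]
    exact add_mem hmem haW
  have hv0 : v ≠ 0 := fun h => hvW (h ▸ zero_mem W)
  -- move to submodules over ZMod p
  set Wm : Submodule (ZMod p) (Fin r → ZMod p) := AddSubgroup.toZModSubmodule p W with hWm
  set W'm : Submodule (ZMod p) (Fin r → ZMod p) := AddSubgroup.toZModSubmodule p W' with hW'm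
  have hW'm_eq : W'm = Wm ⊔ Submodule.span (ZMod p) {v} := by
    rw [hW'm, hW', map_sup, ← hWm, toZMod_closure]
  have hvWm : v ∉ Wm := by
    rw [hWm, AddSubgroup.mem_toZModSubmodule]
    exact hvW
  -- cardinalities
  have cardW : Nat.card W = p ^ (k - 1) := by
    rw [← shore_inl hinv hd0 ((bipGraph E).connectedComponentMk (Sum.inl 0))]
    exact (hshore _).1
  have cardWm : Nat.card Wm = p ^ (k - 1) := by
    rw [← cardW]
    exact Nat.card_congr (Equiv.subtypeEquivRight fun x => by
      rw [hWm, AddSubgroup.mem_toZModSubmodule])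
  haveI : Fintype Wm := Fintype.ofFinite _
  haveI : Fintype W'm := Fintype.ofFinite _
  have cardK : Fintype.card (ZMod p) = p := ZMod.card p
  have hfrWm : Module.finrank (ZMod p) Wm = k - 1 := by
    have h1 : Fintype.card Wm = Fintype.card (ZMod p) ^ Module.finrank (ZMod p) Wm :=
      Module.card_eq_pow_finrank
    rw [cardK, ← Nat.card_eq_fintype_card, cardWm] at h1
    exact (Nat.pow_right_injective hp.two_le h1.symm)
  have hfrspan : Module.finrank (ZMod p) (Submodule.span (ZMod p) {v}) = 1 :=
    finrank_span_singleton hv0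
  have hdisj : Wm ⊓ Submodule.span (ZMod p) {v} = ⊥ :=
    disjoint_iff.mp ((Submodule.disjoint_span_singleton' hv0).mpr hvWm)
  have hfrW'm : Module.finrank (ZMod p) W'm = k := by
    have h := Submodule.finrank_sup_add_finrank_inf_eq Wm (Submodule.span (ZMod p) {v})
    rw [hdisj, finrank_bot, hfrWm, hfrspan, ← hW'm_eq] at h
    omega
  have cardW'm : Nat.card W'm = p ^ k := by
    have h1 : Fintype.card W'm = Fintype.card (ZMod p) ^ Module.finrank (ZMod p) W'm :=
      Module.card_eq_pow_finrank
    rw [cardK, hfrW'm, ← Nat.card_eq_fintype_card] at h1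
    exact h1
  have cardW' : Nat.card W' = p ^ k := by
    rw [← cardW'm]
    exact Nat.card_congr (Equiv.subtypeEquivRight fun x => by
      rw [hW'm, AddSubgroup.mem_toZModSubmodule]).symm
  -- total cardinality
  have cardG : Nat.card (Fin r → ZMod p) = p ^ r := by
    rw [Nat.card_fun, Nat.card_zmod, Nat.card_eq_fintype_card, Fintype.card_fin]
  have cardQ : Nat.card ((Fin r → ZMod p) ⧸ W') = p ^ (r - k) := by
    have h := AddSubgroup.card_eq_card_quotient_mul_card_addSubgroup W'
    rw [cardG, cardW'] at h
    have hk : p ^ (r - k) * p ^ k = p ^ r := by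
      rw [← pow_add]
      congr 1
      omega
    have hpk : 0 < p ^ k := Nat.pow_pos hp.pos
    exact Nat.eq_of_mul_eq_mul_right hpk (by rw [← h, hk])
  constructor
  · rw [card_components hinv' hd0', ← hW'def, cardQ]
  · intro c
    constructor
    · rw [shore_inl hinv' hd0' c, ← hW'def, cardW']
    · rw [shore_inr hinv' hd0' c, ← hW'def, cardW']
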